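/- For μ ∈ [0, 3/13], the function M ↦ D(2^M; μ) = (D_0/(1-μ)) · 2^{M·log₂((1-μ)/4)} · ((4/3)μ·4^M + 4μ·2^M + (1 - (16/3)μ)) is convex and monotonically decreasing on [0, ∞). -/

import Mathlib

set_option maxHeartbeats 1000000

theorem stmt9 (D0 μ : ℝ) (hD0 : 0 < D0) (hμ : μ ∈ Set.Icc (0 : ℝ) (3 / 13)) :
    ConvexOn ℝ (Set.Ici (0 : ℝ))
      (fun M : ℝ => D0 / (1 - μ) * (2 : ℝ) ^ (M * Real.logb 2 ((1 - μ) / 4)) *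
        ((4 / 3) * μ * (4 : ℝ) ^ M + 4 * μ * (2 : ℝ) ^ M + (1 - (16 / 3) * μ))) ∧
    AntitoneOn
      (fun M : ℝ => D0 / (1 - μ) * (2 : ℝ) ^ (M * Real.logb 2 ((1 - μ) / 4)) *
        ((4 / 3) * μ * (4 : ℝ) ^ M + 4 * μ * (2 : ℝ) ^ M + (1 - (16 / 3) * μ)))
      (Set.Ici (0 : ℝ)) := by
  obtain ⟨hμ0, hμ1⟩ := hμ
  have hr : (0:ℝ) < 1 - μ := by linarith
  set L : ℝ := Real.log 2 with hLdef
  have hL : 0 < L := Real.log_pos (by norm_num)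
  set p : ℝ := Real.log (1 - μ) with hpdef
  have hp : p ≤ 0 := Real.log_nonpos (by linarith) (by linarith)
  set K : ℝ := D0 / (1 - μ) with hKdef
  have hKpos : 0 < K := div_pos hD0 hr
  set g : ℝ → ℝ := fun M => K * ((4/3)*μ*Real.exp (p*M) + 4*μ*Real.exp ((p-L)*M)
      + (1-(16/3)*μ)*Real.exp ((p-2*L)*M)) with hgdef
  set g1 : ℝ → ℝ := fun M => K * ((4/3)*μ*p*Real.exp (p*M) + 4*μ*(p-L)*Real.exp ((p-L)*M)
      + (1-(16/3)*μ)*(p-2*L)*Real.exp ((p-2*L)*M)) with hg1def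
  set g2 : ℝ → ℝ := fun M => K * ((4/3)*μ*(p*p)*Real.exp (p*M) + 4*μ*((p-L)*(p-L))*Real.exp ((p-L)*M)
      + (1-(16/3)*μ)*((p-2*L)*(p-2*L))*Real.exp ((p-2*L)*M)) with hg2def
  have hlog4 : Real.log 4 = 2*L := by
    rw [show (4:ℝ) = 2^(2:ℕ) by norm_num, Real.log_pow]; push_cast; ring
  have hfg : (fun M : ℝ => D0 / (1 - μ) * (2 : ℝ) ^ (M * Real.logb 2 ((1 - μ) / 4)) *
        ((4 / 3) * μ * (4 : ℝ) ^ M + 4 * μ * (2 : ℝ) ^ M + (1 - (16 / 3) * μ))) = g := by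
    funext M
    have h2 : (2:ℝ) ^ (M * Real.logb 2 ((1-μ)/4)) = Real.exp ((p - 2*L)*M) := by
      rw [Real.rpow_def_of_pos (by norm_num : (0:ℝ) < 2)]
      congr 1
      rw [Real.logb, Real.log_div (by linarith) (by norm_num), hlog4, ← hpdef, ← hLdef]
      field_simp
    have h4M : (4:ℝ) ^ M = Real.exp ((2*L)*M) := by
      rw [Real.rpow_def_of_pos (by norm_num : (0:ℝ) < 4), hlog4]
    have h2M : (2:ℝ) ^ M = Real.exp (L*M) := by
      rw [Real.rpow_def_of_pos (by norm_num : (0:ℝ) < 2), ← hLdef]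
    have e1 : Real.exp ((p-2*L)*M) * Real.exp ((2*L)*M) = Real.exp (p*M) := by
      rw [← Real.exp_add]; ring_nf
    have e2 : Real.exp ((p-2*L)*M) * Real.exp (L*M) = Real.exp ((p-L)*M) := by
      rw [← Real.exp_add]; ring_nf
    simp only [hgdef, ← e1, ← e2, h2, h4M, h2M, hKdef]
    ring
  have hd1 : ∀ M : ℝ, HasDerivAt g (g1 M) M := by
    intro M
    have e1 : HasDerivAt (fun x : ℝ => Real.exp (p*x)) (Real.exp (p*M) * (p*1)) M :=
      ((hasDerivAt_id M).const_mul p).exp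
    have e2 : HasDerivAt (fun x : ℝ => Real.exp ((p-L)*x)) (Real.exp ((p-L)*M) * ((p-L)*1)) M :=
      ((hasDerivAt_id M).const_mul (p-L)).exp
    have e3 : HasDerivAt (fun x : ℝ => Real.exp ((p-2*L)*x)) (Real.exp ((p-2*L)*M) * ((p-2*L)*1)) M :=
      ((hasDerivAt_id M).const_mul (p-2*L)).exp
    have := (((e1.const_mul ((4/3)*μ)).add (e2.const_mul (4*μ))).add
      (e3.const_mul (1-(16/3)*μ))).const_mul K
    convert this using 1
    · rfl
    · rfl
    · rfl
    simp only [g1]; ring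
  have hd2 : ∀ M : ℝ, HasDerivAt g1 (g2 M) M := by
    intro M
    have e1 : HasDerivAt (fun x : ℝ => Real.exp (p*x)) (Real.exp (p*M) * (p*1)) M :=
      ((hasDerivAt_id M).const_mul p).exp
    have e2 : HasDerivAt (fun x : ℝ => Real.exp ((p-L)*x)) (Real.exp ((p-L)*M) * ((p-L)*1)) M :=
      ((hasDerivAt_id M).const_mul (p-L)).exp
    have e3 : HasDerivAt (fun x : ℝ => Real.exp ((p-2*L)*x)) (Real.exp ((p-2*L)*M) * ((p-2*L)*1)) M :=
      ((hasDerivAt_id M).const_mul (p-2*L)).exp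
    have := (((e1.const_mul ((4/3)*μ*p)).add (e2.const_mul (4*μ*(p-L)))).add
      (e3.const_mul ((1-(16/3)*μ)*(p-2*L)))).const_mul K
    convert this using 1
    · rfl
    · rfl
    · rfl
    simp only [g2]; ring
  have hderiv : deriv g = g1 := funext fun M => (hd1 M).deriv
  have hderiv2 : deriv g1 = g2 := funext fun M => (hd2 M).deriv
  -- exp decomposition facts for x ≥ 0
  have key : ∀ x : ℝ, 0 ≤ x → g1 x ≤ 0 ∧ 0 ≤ g2 x := by
    intro x hx
    set E : ℝ := Real.exp ((p-2*L)*x) with hEdef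
    set t : ℝ := Real.exp (L*x) with htdef
    have hEpos : 0 < E := Real.exp_pos _
    have ht : 1 ≤ t := by
      rw [htdef, show (1:ℝ) = Real.exp 0 by simp]
      exact Real.exp_le_exp.2 (mul_nonneg hL.le hx)
    have f1 : Real.exp (p*x) = E * (t*t) := by
      rw [hEdef, htdef, ← Real.exp_add, ← Real.exp_add]; ring_nf
    have f2 : Real.exp ((p-L)*x) = E * t := by
      rw [hEdef, htdef, ← Real.exp_add]; ring_nf
    have hg1x : g1 x = K * E * ((4/3)*μ*p*(t*t) + 4*μ*(p-L)*t + (1-(16/3)*μ)*(p-2*L)) := by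
      simp only [hg1def, f1, f2]; ring
    have hg2x : g2 x = K * E * ((4/3)*μ*(p*p)*(t*t) + 4*μ*((p-L)*(p-L))*t
        + (1-(16/3)*μ)*((p-2*L)*(p-2*L))) := by
      simp only [hg2def, f1, f2]; ring
    have hKE : 0 ≤ K * E := (mul_pos hKpos hEpos).le
    constructor
    · rw [hg1x]
      have htt : 0 ≤ t*t - 1 := by nlinarith
      have a1 : (4/3)*μ*p*(t*t-1) ≤ 0 := by
        nlinarith [mul_nonneg (mul_nonneg hμ0 htt) (neg_nonneg.2 hp)]
      have a2 : 4*μ*(p-L)*(t-1) ≤ 0 := by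
        nlinarith [mul_nonneg (mul_nonneg hμ0 (by linarith : (0:ℝ) ≤ t - 1))
          (neg_nonneg.2 (by linarith : p - L ≤ 0))]
      have a3 : 0 ≤ (2 - 20*μ/3)*L := mul_nonneg (by linarith) hL.le
      have hS : (4/3)*μ*p*(t*t) + 4*μ*(p-L)*t + (1-(16/3)*μ)*(p-2*L) ≤ 0 := by
        nlinarith [a1, a2, a3, hp]
      exact mul_nonpos_of_nonneg_of_nonpos hKE hS
    · rw [hg2x]
      have htt : 0 ≤ t*t - 1 := by nlinarith
      have a1 : 0 ≤ (4/3)*μ*(p*p)*(t*t-1) :=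
        mul_nonneg (mul_nonneg (mul_nonneg (by norm_num) hμ0) (mul_self_nonneg p)) htt
      have a2 : 0 ≤ 4*μ*((p-L)*(p-L))*(t-1) :=
        mul_nonneg (mul_nonneg (mul_nonneg (by norm_num) hμ0) (mul_self_nonneg (p-L)))
          (by linarith)
      have a3 : 0 ≤ (4 - 40*μ/3)*(-p)*L :=
        mul_nonneg (mul_nonneg (by linarith) (by linarith)) hL.le
      have a4 : 0 ≤ (4 - 52*μ/3)*(L*L) :=
        mul_nonneg (by linarith) (mul_nonneg hL.le hL.le)
      have hS : 0 ≤ (4/3)*μ*(p*p)*(t*t) + 4*μ*((p-L)*(p-L))*t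
          + (1-(16/3)*μ)*((p-2*L)*(p-2*L)) := by
        nlinarith [a1, a2, a3, a4, mul_self_nonneg p]
      exact mul_nonneg hKE hS
  have hcont : ContinuousOn g (Set.Ici (0:ℝ)) :=
    (HasDerivAt.continuousOn fun x _ => hd1 x)
  have hdiff : DifferentiableOn ℝ g (interior (Set.Ici (0:ℝ))) :=
    fun x _ => (hd1 x).differentiableAt.differentiableWithinAt
  have hdiff2 : DifferentiableOn ℝ (deriv g) (interior (Set.Ici (0:ℝ))) := by
    rw [hderiv]
    exact fun x _ => (hd2 x).differentiableAt.differentiableWithinAt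
  rw [hfg]
  constructor
  · refine convexOn_of_deriv2_nonneg (convex_Ici 0) hcont hdiff hdiff2 ?_
    intro x hx
    have hx0 : 0 ≤ x := le_of_lt (by simpa using hx)
    have : deriv^[2] g x = g2 x := by
      simp only [Function.iterate_succ, Function.iterate_zero, Function.comp_apply, id_eq]
      rw [hderiv, hderiv2]
    rw [this]
    exact (key x hx0).2
  · refine antitoneOn_of_deriv_nonpos (convex_Ici 0) hcont hdiff ?_
    intro x hx
    have hx0 : 0 ≤ x := le_of_lt (by simpa using hx)
    rw [hderiv]
    exact (key x hx0).1
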